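/- Let $n\ge 2$ and let $x,z\in\mathbb{R}^n$ be distinct. For $y\in\mathbb{R}^n\setminus\{x,z\}$ define $E_{xyyz}=\frac{x-y}{|x-y|}-\frac{y-z}{|y-z|}$. Write $y=\frac{x+z}{2}+s_y\frac{x-z}{|x-z|}+h_y$ with $s_y\in\mathbb{R}$ and $h_y\perp(x-z)$, and let $\Gamma=\{y:0<|h_y|<\frac{|x-z|}{2}-|s_y|\}$. Then there are absolute constants $c,C>0$ (independent of $x,z,y$) such that: (i) for $y\in\Gamma$, $c\,\frac{|h_y|}{\min\{|x-y|,|y-z|\}}\le |E_{xyyz}|\le C\,\frac{|h_y|}{\min\{|x-y|,|y-z|\}}$; (ii) for $y\notin\overline{\Gamma}$ with $y\ne x,z$, $c\le |E_{xyyz}|\le 2$. -/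

import Mathlib

set_option maxHeartbeats 1000000

lemma sq_le_imp (a b : ℝ) (hb : 0 ≤ b) (h : a^2 ≤ b^2) : a ≤ b := by
  nlinarith [sq_nonneg (a - b), sq_nonneg (a + b)]

lemma keyA (p q r A B : ℝ) (hpq : p ≤ q) (hL : 0 < p + q) (hr : 0 ≤ r)
    (hA : 0 < A) (hB : 0 < B) (hA2 : A^2 = p^2 + r^2) (hB2 : B^2 = q^2 + r^2) :
    ((0 < r → r < p →
      (1/2*(r/A))^2 ≤ 2 - 2*(p*q-r^2)/(A*B) ∧ 2 - 2*(p*q-r^2)/(A*B) ≤ (3*(r/A))^2) ∧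
     (p < r → (1/2:ℝ)^2 ≤ 2 - 2*(p*q-r^2)/(A*B) ∧ 2 - 2*(p*q-r^2)/(A*B) ≤ 2^2)) ∧
    A ≤ B := by
  have hq : 0 < q := by nlinarith
  have hAB : 0 < A * B := mul_pos hA hB
  have hid : A^2 * B^2 - (p*q - r^2)^2 = r^2 * (p+q)^2 := by rw [hA2, hB2]; ring
  have he2 : 2 - 2*(p*q-r^2)/(A*B) = (2*(A*B) - 2*(p*q-r^2))/(A*B) := by
    field_simp
  constructor
  · constructor
    · rintro hr0 hrp
      have hp : 0 < p := lt_trans hr0 hrp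
      have hK : 0 ≤ p*q - r^2 := by nlinarith
      have hKAB : p*q - r^2 ≤ A*B := by nlinarith
      have hABK : 0 < A*B + (p*q - r^2) := by linarith
      have hB4 : B^2 ≤ (p+q)^2 := by nlinarith
      have e0 : 0 ≤ r^2*A^2*(p+q)^2 := by positivity
      constructor
      · -- r^2 * (A*B) ≤ (2*(A*B) - 2*(p*q-r^2)) * (4*A^2)
        have e1 : ((2*(A*B) - 2*(p*q-r^2)) * (4*A^2))*(A*B+(p*q-r^2))
            = 8*(r^2*A^2*(p+q)^2) := by linear_combination 8*A^2*hid
        have e2 : r^2*(A*B)*(A*B+(p*q-r^2)) ≤ 2*(r^2*A^2*(p+q)^2) := by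
          nlinarith [mul_nonneg (mul_nonneg (sq_nonneg r) hAB.le) (sub_nonneg.2 hKAB),
            mul_nonneg (mul_nonneg (sq_nonneg r) (sq_nonneg A)) (sub_nonneg.2 hB4)]
        have e3 : r^2 * (A*B) * (A*B+(p*q-r^2)) ≤
            ((2*(A*B) - 2*(p*q-r^2)) * (4*A^2)) * (A*B+(p*q-r^2)) := by linarith
        have e4 : r^2 * (A*B) ≤ (2*(A*B) - 2*(p*q-r^2)) * (4*A^2) :=
          le_of_mul_le_mul_right e3 hABK
        calc (1/2*(r/A))^2 = r^2/(4*A^2) := by field_simp; ring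
          _ ≤ (2*(A*B) - 2*(p*q-r^2))/(A*B) := by
              rw [div_le_div_iff₀ (by positivity) hAB]; linarith
          _ = 2 - 2*(p*q-r^2)/(A*B) := he2.symm
      · have e1 : ((2*(A*B) - 2*(p*q-r^2))*A^2)*(A*B+(p*q-r^2)) = 2*(r^2*A^2*(p+q)^2) := by
          linear_combination 2*A^2*hid
        have e5 : 0 ≤ r^2*A^2*(9*B^2 - 2*(p+q)^2) :=
          mul_nonneg (mul_nonneg (sq_nonneg r) (sq_nonneg A)) (by nlinarith)
        have ha : 0 ≤ ((2*(A*B) - 2*(p*q-r^2))*A^2)*(p*q-r^2) :=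
          mul_nonneg (mul_nonneg (by linarith) (sq_nonneg A)) hK
        have e3 : ((2*(A*B) - 2*(p*q-r^2)) * A^2) * (A*B) ≤ (9*r^2*(A*B)) * (A*B) := by
          nlinarith [e1, e5, ha]
        have e4 : (2*(A*B) - 2*(p*q-r^2)) * A^2 ≤ 9*r^2*(A*B) :=
          le_of_mul_le_mul_right e3 hAB
        calc 2 - 2*(p*q-r^2)/(A*B) = (2*(A*B) - 2*(p*q-r^2))/(A*B) := he2
          _ ≤ (9*r^2)/A^2 := by rw [div_le_div_iff₀ hAB (by positivity)]; linarith
          _ = (3*(r/A))^2 := by field_simp; ring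
    · rintro hpr
      constructor
      · rw [he2, le_div_iff₀ hAB]
        rcases le_or_gt (p*q - r^2) 0 with hK | hK
        · linarith
        · have hp : 0 < p := by nlinarith
          have hA2' : A^2 ≤ 2*r^2 := by nlinarith
          have hB2' : B^2 ≤ 2*q^2 := by nlinarith
          have h4 : A^2*B^2 ≤ 4*(r^2*(p+q)^2) := by
            nlinarith [mul_nonneg (sq_nonneg r) (sq_nonneg q), sq_nonneg p,
              mul_pos hp hq, mul_nonneg (sq_nonneg B) (sub_nonneg.2 hA2'),
              mul_nonneg (by positivity : (0:ℝ) ≤ 2*r^2) (sub_nonneg.2 hB2')]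
          have h64 : (8*(p*q-r^2))^2 ≤ (7*(A*B))^2 := by nlinarith [hid, h4]
          have := sq_le_imp (8*(p*q-r^2)) (7*(A*B)) (by positivity) h64
          linarith
      · rw [he2, div_le_iff₀ hAB]
        rcases le_or_gt 0 (p*q - r^2) with hK | hK
        · linarith
        · have h2 : (-(p*q-r^2))^2 ≤ (A*B)^2 := by nlinarith [sq_nonneg (p+q), sq_nonneg r]
          have := sq_le_imp (-(p*q-r^2)) (A*B) hAB.le h2
          linarith
  · have hp2 : p^2 ≤ q^2 := by nlinarith
    nlinarith [sq_nonneg (A - B), sq_nonneg (A + B)]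

lemma keyS (p q r A B : ℝ) (hL : 0 < p + q) (hr : 0 ≤ r)
    (hA : 0 < A) (hB : 0 < B) (hA2 : A^2 = p^2 + r^2) (hB2 : B^2 = q^2 + r^2) :
    (0 < r → r < min p q →
      (1/2*(r/min A B))^2 ≤ 2 - 2*(p*q-r^2)/(A*B) ∧
      2 - 2*(p*q-r^2)/(A*B) ≤ (3*(r/min A B))^2) ∧
    (min p q < r → (1/2:ℝ)^2 ≤ 2 - 2*(p*q-r^2)/(A*B) ∧ 2 - 2*(p*q-r^2)/(A*B) ≤ 2^2) := by
  rcases le_total p q with hpq | hpq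
  · obtain ⟨⟨h1, h2⟩, hABle⟩ := keyA p q r A B hpq hL hr hA hB hA2 hB2
    rw [min_eq_left hpq, min_eq_left hABle]
    exact ⟨fun a b => h1 a b, h2⟩
  · obtain ⟨⟨h1, h2⟩, hABle⟩ := keyA q p r B A hpq (by linarith) hr hB hA hB2 hA2
    rw [min_eq_right hpq, min_eq_right hABle]
    have e : 2 - 2*(p*q-r^2)/(A*B) = 2 - 2*(q*p-r^2)/(B*A) := by ring_nf
    rw [e]
    exact ⟨fun a b => h1 a b, h2⟩

theorem stmt2 :
    ∃ c > (0 : ℝ), ∃ C > (0 : ℝ), ∀ (n : ℕ), 2 ≤ n →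
      ∀ x z y : EuclideanSpace ℝ (Fin n), x ≠ z → y ≠ x → y ≠ z →
        ∀ (s : ℝ) (h : EuclideanSpace ℝ (Fin n)),
          y = (2 : ℝ)⁻¹ • (x + z) + s • (‖x - z‖⁻¹ • (x - z)) + h →
          (inner ℝ h (x - z) : ℝ) = 0 →
          ((0 < ‖h‖ ∧ ‖h‖ < ‖x - z‖ / 2 - |s| →
              c * (‖h‖ / min ‖x - y‖ ‖y - z‖) ≤
                ‖‖x - y‖⁻¹ • (x - y) - ‖y - z‖⁻¹ • (y - z)‖ ∧
              ‖‖x - y‖⁻¹ • (x - y) - ‖y - z‖⁻¹ • (y - z)‖ ≤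
                C * (‖h‖ / min ‖x - y‖ ‖y - z‖)) ∧
            (‖x - z‖ / 2 - |s| < ‖h‖ →
              c ≤ ‖‖x - y‖⁻¹ • (x - y) - ‖y - z‖⁻¹ • (y - z)‖ ∧
              ‖‖x - y‖⁻¹ • (x - y) - ‖y - z‖⁻¹ • (y - z)‖ ≤ 2)) := by
  refine ⟨1/2, by norm_num, 3, by norm_num, ?_⟩
  intro n _hn x z y hxz hyx hyz s h hy hperp
  set L := ‖x - z‖ with hLdef
  have hL : 0 < L := norm_sub_pos_iff.2 hxz
  have hL0 : L ≠ 0 := hL.ne'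
  set p := L/2 - s with hpdef
  set q := L/2 + s with hqdef
  have hxy : x - y = (p/L) • (x - z) - h := by
    rw [hy]
    match_scalars <;> field_simp <;> ring
  have hyz' : y - z = (q/L) • (x - z) + h := by
    rw [hy]
    match_scalars <;> field_simp <;> ring
  have hwh : (inner ℝ (x - z) h : ℝ) = 0 := by rw [real_inner_comm]; exact hperp
  have hA2 : ‖x - y‖^2 = p^2 + ‖h‖^2 := by
    rw [hxy, norm_sub_sq_real, real_inner_smul_left, hwh, norm_smul]
    simp only [mul_pow, Real.norm_eq_abs, sq_abs, div_pow, ← hLdef]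
    field_simp; ring
  have hB2 : ‖y - z‖^2 = q^2 + ‖h‖^2 := by
    rw [hyz', norm_add_sq_real, real_inner_smul_left, hwh, norm_smul]
    simp only [mul_pow, Real.norm_eq_abs, sq_abs, div_pow, ← hLdef]
    field_simp; ring
  have hww : (inner ℝ (x - z) (x - z) : ℝ) = L^2 := real_inner_self_eq_norm_sq (x - z)
  have hinner : (inner ℝ (x - y) (y - z) : ℝ) = p*q - ‖h‖^2 := by
    rw [hxy, hyz']
    simp only [inner_sub_left, inner_add_right, real_inner_smul_left, real_inner_smul_right,
      hperp, hwh, hww, real_inner_self_eq_norm_sq]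
    field_simp
    ring
  have hA : 0 < ‖x - y‖ := norm_sub_pos_iff.2 hyx.symm
  have hB : 0 < ‖y - z‖ := norm_sub_pos_iff.2 hyz
  have hE2 : ‖‖x - y‖⁻¹ • (x - y) - ‖y - z‖⁻¹ • (y - z)‖^2
      = 2 - 2*(p*q - ‖h‖^2)/(‖x - y‖*‖y - z‖) := by
    rw [norm_sub_sq_real, real_inner_smul_left, real_inner_smul_right, hinner,
      norm_smul, norm_smul]
    simp only [Real.norm_eq_abs]
    rw [abs_of_pos (inv_pos.2 hA), abs_of_pos (inv_pos.2 hB)]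
    field_simp
    ring
  have hpq : 0 < p + q := by rw [hpdef, hqdef]; linarith
  have hmin : min p q = L/2 - |s| := by
    rcases le_total 0 s with hs | hs
    · rw [abs_of_nonneg hs, hpdef, hqdef, min_eq_left (by linarith)]
    · rw [abs_of_nonpos hs, hpdef, hqdef, min_eq_right (by linarith)]
      ring
  have hm : 0 < min ‖x - y‖ ‖y - z‖ := lt_min hA hB
  obtain ⟨K1, K2⟩ := keyS p q ‖h‖ ‖x - y‖ ‖y - z‖ hpq (norm_nonneg h) hA hB hA2 hB2
  constructor
  · rintro ⟨hr0, hrlt⟩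
    obtain ⟨g1, g2⟩ := K1 hr0 (by rw [hmin]; exact hrlt)
    constructor
    · exact sq_le_imp _ _ (norm_nonneg _) (by rw [hE2]; exact g1)
    · exact sq_le_imp _ _
        (mul_nonneg (by norm_num) (div_nonneg (norm_nonneg h) hm.le))
        (by rw [hE2]; exact g2)
  · intro hlt
    obtain ⟨g1, g2⟩ := K2 (by rw [hmin]; exact hlt)
    constructor
    · exact sq_le_imp _ _ (norm_nonneg _) (by rw [hE2]; exact g1)
    · exact sq_le_imp _ _ (by norm_num) (by rw [hE2]; exact g2)
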